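/- Let b ≥ 2 be an integer, K a semiring, and f : ℕ → K. Then the series Σ_{n∈ℕ} f(n) rep_b(n) (over the base-b expansions of the natural numbers) is K-recognizable if and only if the series Σ_{w∈{0,1,…,b−1}*} f(val_b(w)) w is K-recognizable. -/

import Mathlib

open scoped Classical


/-- extended row vector (lam, 0) -/
def lamext {K : Type} [Semiring K] {r : ℕ} (lam : Matrix (Fin 1) (Fin r) K) :
    Matrix (Fin 1) (Fin r ⊕ Fin r) K :=
  Matrix.of fun i j => Sum.elim (fun k => lam i k) (fun _ => 0) j

/-- extended column vector (gam; gam) -/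
def gamext {K : Type} [Semiring K] {r : ℕ} (gam : Matrix (Fin r) (Fin 1) K) :
    Matrix (Fin r ⊕ Fin r) (Fin 1) K :=
  Matrix.of fun j i => Sum.elim (fun k => gam k i) (fun k => gam k i) j

lemma quad {K : Type} [Semiring K] {r : ℕ} (lam : Matrix (Fin 1) (Fin r) K)
    (gam : Matrix (Fin r) (Fin 1) K) (A B C D : Matrix (Fin r) (Fin r) K) :
    (lamext lam * Matrix.fromBlocks A B C D * gamext gam) 0 0
      = (lam * A * gam) 0 0 + (lam * B * gam) 0 0 := by
  simp [lamext, gamext, Matrix.mul_apply, Fintype.sum_sum_type, Matrix.fromBlocks,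
    Finset.sum_mul, Finset.mul_sum]

section Helpers
variable {K : Type} [Semiring K] {r : ℕ}

lemma prodL (mu : ℕ → Matrix (Fin r) (Fin r) K) (a : ℕ) (v : List ℕ) :
    ((a :: v).map (fun c =>
        Matrix.fromBlocks (0 : Matrix (Fin r) (Fin r) K) (if c = 0 then 0 else mu c) 0 (mu c))).prod
      = Matrix.fromBlocks 0 (if a = 0 then 0 else ((a :: v).map mu).prod) 0
          (((a :: v).map mu).prod) := by
  induction v generalizing a with
  | nil => by_cases h : a = 0 <;> simp [h, Matrix.fromBlocks_one]
  | cons c v ih =>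
      rw [List.map_cons, List.prod_cons, ih c]
      rw [Matrix.fromBlocks_multiply]
      by_cases h : a = 0 <;> simp [h]

lemma prodR (mu : ℕ → Matrix (Fin r) (Fin r) K) (w : List ℕ) :
    (w.map (fun c =>
        Matrix.fromBlocks (if c = 0 then (1 : Matrix (Fin r) (Fin r) K) else 0)
          (if c = 0 then 0 else mu c) 0 (mu c))).prod
      = Matrix.fromBlocks (if ∀ x ∈ w, x = 0 then 1 else 0)
          (if ∀ x ∈ w, x = 0 then 0 else ((w.dropWhile (· == 0)).map mu).prod) 0
          ((w.map mu).prod) := by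
  induction w with
  | nil => simp [Matrix.fromBlocks_one]
  | cons a v ih =>
      rw [List.map_cons, List.prod_cons, ih, Matrix.fromBlocks_multiply]
      by_cases h : a = 0
      · subst h
        by_cases hv : ∀ x ∈ v, x = 0 <;>
          simp [hv, List.dropWhile_cons]
      · have : ¬ ∀ x ∈ a :: v, x = 0 := fun hh => h (hh a (by simp))
        by_cases hv : ∀ x ∈ v, x = 0 <;>
          simp [h, this, hv, List.dropWhile_cons]

lemma prod_submatrix {s : ℕ} (e : (Fin r ⊕ Fin r) ≃ Fin s)
    (mu' : ℕ → Matrix (Fin r ⊕ Fin r) (Fin r ⊕ Fin r) K) (w : List ℕ) :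
    (w.map (fun a => (mu' a).submatrix e.symm e.symm)).prod
      = ((w.map mu').prod).submatrix e.symm e.symm := by
  induction w with
  | nil => simp [Matrix.submatrix_one_equiv]
  | cons a v ih => rw [List.map_cons, List.prod_cons, ih, List.map_cons, List.prod_cons,
      Matrix.submatrix_mul_equiv]

lemma ofDigits_allzero {b : ℕ} {l : List ℕ} (h : ∀ x ∈ l, x = 0) :
    Nat.ofDigits b l = 0 := by
  induction l with
  | nil => simp
  | cons a v ih =>
      rw [Nat.ofDigits_cons, h a (by simp), ih (fun x hx => h x (by simp [hx]))]
      simp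

lemma ofDigits_strip (b : ℕ) (w : List ℕ) :
    Nat.ofDigits b ((w.dropWhile (· == 0)).reverse) = Nat.ofDigits b w.reverse := by
  conv_rhs => rw [← List.takeWhile_append_dropWhile (p := (· == 0)) (l := w)]
  rw [List.reverse_append, Nat.ofDigits_append]
  have : Nat.ofDigits b (w.takeWhile (· == 0)).reverse = 0 := by
    apply ofDigits_allzero
    intro x hx
    have := List.mem_takeWhile_imp (List.mem_reverse.mp hx)
    simpa using this
  simp [this]

lemma drop_head_ne {l : List ℕ} {a : ℕ} {t : List ℕ}
    (h : l.dropWhile (· == 0) = a :: t) : a ≠ 0 := by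
  induction l with
  | nil => simp at h
  | cons c v ih =>
      rw [List.dropWhile_cons] at h
      split at h
      · exact ih h
      · next hc => cases h; simpa using hc

lemma canon_cons {b : ℕ} (hb : 2 ≤ b) {a : ℕ} {v : List ℕ} (ha : a ≠ 0)
    (hw : ∀ x ∈ a :: v, x < b) :
    (Nat.digits b (Nat.ofDigits b (a :: v).reverse)).reverse = a :: v := by
  rw [Nat.digits_ofDigits b hb _ (fun l hl => hw l (List.mem_reverse.mp hl))
    (fun h => by rwa [List.getLast_reverse]), List.reverse_reverse]

lemma not_canon {b : ℕ} {n : ℕ} {v : List ℕ} :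
    (Nat.digits b n).reverse ≠ 0 :: v := by
  intro h
  have hL : Nat.digits b n = v.reverse ++ [0] := by
    rw [← List.reverse_reverse (Nat.digits b n), h, List.reverse_cons]
  have hn : n ≠ 0 := by
    intro h0; subst h0; simp at hL
  have h1 := Nat.getLast_digit_ne_zero b hn
  have h2 : (Nat.digits b n).getLast? = some 0 := by
    rw [hL]; exact List.getLast?_concat
  rw [List.getLast?_eq_getLast (Nat.digits_ne_nil_iff_ne_zero.mpr hn)] at h2
  exact h1 (Option.some_injective _ h2)

end Helpers

/-- A formal series, given as a function on all words over `α`, is `K`-recognizable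
over the alphabet `A ⊆ α` if there are `r ≥ 1`, a row vector `λ`, a matrix-valued
map `μ` on letters (extended to a monoid morphism on words by taking products), and
a column vector `γ` with `(S, w) = λ μ(w) γ` for every word `w` over `A`. -/
def KRecOn {K : Type} [Semiring K] {α : Type} (A : Set α) (S : List α → K) : Prop :=
  ∃ r : ℕ, 0 < r ∧
    ∃ (lam : Matrix (Fin 1) (Fin r) K) (mu : α → Matrix (Fin r) (Fin r) K)
      (gam : Matrix (Fin r) (Fin 1) K),
      ∀ w : List α, (∀ x ∈ w, x ∈ A) → S w = (lam * (w.map mu).prod * gam) 0 0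


/-- For an integer base `b ≥ 2`, a semiring `K` and `f : ℕ → K`, the series
`Σ_{n ∈ ℕ} f(n) rep_b(n)` (supported on the base-`b` expansions of the natural
numbers) is `K`-recognizable if and only if the series
`Σ_{w ∈ {0,…,b-1}*} f(val_b(w)) w` is `K`-recognizable. -/
theorem base_b_regular_iff {K : Type} [Semiring K] (b : ℕ) (hb : 2 ≤ b)
    (f : ℕ → K) :
    KRecOn {a : ℕ | a < b}
      (fun w : List ℕ =>
        if (Nat.digits b (Nat.ofDigits b w.reverse)).reverse = w then
          f (Nat.ofDigits b w.reverse)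
        else 0) ↔
    KRecOn {a : ℕ | a < b} (fun w : List ℕ => f (Nat.ofDigits b w.reverse)) := by
  constructor
  · -- T recognizable → S recognizable
    rintro ⟨r, hr, lam, mu, gam, hrep⟩
    set e : (Fin r ⊕ Fin r) ≃ Fin (r + r) := finSumFinEquiv with he
    refine ⟨r + r, by omega, (lamext lam).submatrix id e.symm,
      fun a => (Matrix.fromBlocks (if a = 0 then 1 else 0)
        (if a = 0 then 0 else mu a) 0 (mu a)).submatrix e.symm e.symm,
      (gamext gam).submatrix e.symm id, ?_⟩
    intro w hw
    show f (Nat.ofDigits b w.reverse) = _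
    rw [prod_submatrix e, Matrix.submatrix_mul_equiv, Matrix.submatrix_mul_equiv,
      Matrix.submatrix_id_id, prodR, quad]
    by_cases hz : ∀ x ∈ w, x = 0
    · have h0 : f 0 = (lam * (1 : Matrix (Fin r) (Fin r) K) * gam) 0 0 := by simpa using hrep [] (by simp)
      have hw0 : Nat.ofDigits b w.reverse = 0 :=
        ofDigits_allzero (fun x hx => hz x (List.mem_reverse.mp hx))
      rw [hw0, h0, if_pos hz, if_pos hz]
      simp
    · set v := w.dropWhile (· == 0) with hv
      have hvne : v ≠ [] := by
        intro h
        apply hz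
        intro x hx
        have := (List.dropWhile_eq_nil_iff).mp (hv ▸ h) x hx
        simpa using this
      obtain ⟨a, t, hat⟩ := List.exists_cons_of_ne_nil hvne
      have ha : a ≠ 0 := drop_head_ne (hat ▸ hv.symm)
      have hvmem : ∀ x ∈ v, x ∈ {a : ℕ | a < b} :=
        fun x hx => hw x ((List.dropWhile_sublist _).subset hx)
      have hT : f (Nat.ofDigits b v.reverse) = (lam * (v.map mu).prod * gam) 0 0 := by
        have h1 := hrep v hvmem
        simp only [] at h1
        rwa [hat, if_pos (canon_cons hb ha (hat ▸ hvmem)), ← hat] at h1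
      rw [if_neg hz, if_neg hz]
      have h2 : f (Nat.ofDigits b w.reverse) = f (Nat.ofDigits b v.reverse) := by
        rw [ofDigits_strip b w]
      rw [h2, hT]
      simp
  · -- S recognizable → T recognizable
    rintro ⟨r, hr, lam, mu, gam, hrep⟩
    set e : (Fin r ⊕ Fin r) ≃ Fin (r + r) := finSumFinEquiv with he
    refine ⟨r + r, by omega, (lamext lam).submatrix id e.symm,
      fun a => (Matrix.fromBlocks 0
        (if a = 0 then 0 else mu a) 0 (mu a)).submatrix e.symm e.symm,
      (gamext gam).submatrix e.symm id, ?_⟩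
    intro w hw
    show (if (Nat.digits b (Nat.ofDigits b w.reverse)).reverse = w then
          f (Nat.ofDigits b w.reverse) else 0) = _
    rw [prod_submatrix e, Matrix.submatrix_mul_equiv, Matrix.submatrix_mul_equiv,
      Matrix.submatrix_id_id]
    cases w with
    | nil =>
        have h0 : f 0 = (lam * (1 : Matrix (Fin r) (Fin r) K) * gam) 0 0 := by simpa using hrep [] (by simp)
        simp only [List.map_nil, List.prod_nil]
        rw [show (1 : Matrix (Fin r ⊕ Fin r) (Fin r ⊕ Fin r) K)
            = Matrix.fromBlocks 1 0 0 1 from (Matrix.fromBlocks_one).symm, quad]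
        simpa using h0
    | cons a v =>
        rw [prodL, quad]
        by_cases ha : a = 0
        · subst ha
          rw [if_neg not_canon]
          simp
        · rw [if_pos (canon_cons hb ha hw), if_neg ha]
          have h1 := hrep (a :: v) hw
          simp only [] at h1
          rw [h1]
          simp
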